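/- Let f : ℕ × ℕ → ℕ satisfy f(m,0) = f(0,n) = 1 and f(m+1,n+1) = f(m+1,n) + f(m,n+1) + f(m,n). Then f(m,n) equals the number of sequences (W_1,…,W_t) of nonempty subsets of {0,1} such that 0 occurs in exactly m of the sets W_i and 1 occurs in exactly n of the sets W_i. -/

import Mathlib

def DP (m n : ℕ) (L : List (Finset (Fin 2))) : Prop :=
  (∀ A ∈ L, A.Nonempty) ∧
  L.countP (fun A => decide ((0 : Fin 2) ∈ A)) = m ∧
  L.countP (fun A => decide ((1 : Fin 2) ∈ A)) = n

lemma dp_len {m n : ℕ} {L : List (Finset (Fin 2))} (h : DP m n L) : L.length ≤ m + n := by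
  obtain ⟨hne, h0, h1⟩ := h
  have : L.length = _ := List.length_eq_countP_add_countP (fun A => decide ((0 : Fin 2) ∈ A))
  have hle : L.countP (fun A => !decide ((0 : Fin 2) ∈ A)) ≤
      L.countP (fun A => decide ((1 : Fin 2) ∈ A)) := by
    apply List.countP_mono_left
    intro A hA hd
    simp only [Bool.not_eq_true', decide_eq_false_iff_not] at hd
    simp only [decide_eq_true_eq]
    obtain ⟨x, hx⟩ := hne A hA
    fin_cases x
    · exact absurd hx hd
    · exact hx
  have heq : L.countP (fun a => decide ¬(decide ((0 : Fin 2) ∈ a) = true)) =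
      L.countP (fun A => !decide ((0 : Fin 2) ∈ A)) := by
    apply List.countP_congr; intro A _; simp
  omega

instance dp_finite (m n : ℕ) : Finite {L : List (Finset (Fin 2)) // DP m n L} := by
  have : Finite {L : List (Finset (Fin 2)) // L.length ≤ m + n} :=
    (List.finite_length_le (Finset (Fin 2)) (m + n))
  exact Finite.of_injective (fun L => (⟨L.1, dp_len L.2⟩ : {L : List (Finset (Fin 2)) // L.length ≤ m + n}))
    (fun a b h => Subtype.ext (by simpa [Subtype.ext_iff] using h))

lemma fin2_eq_single {A : Finset (Fin 2)} (hne : A.Nonempty) (i : Fin 2)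
    (h : ∀ j ∈ A, j = i) : A = {i} := by
  obtain ⟨x, hx⟩ := hne
  have hxi := h x hx
  subst hxi
  ext j
  simp only [Finset.mem_singleton]
  constructor
  · exact h j
  · rintro rfl; exact hx

lemma dp_iff_m0 (m : ℕ) (L : List (Finset (Fin 2))) :
    DP m 0 L ↔ L = List.replicate m ({0} : Finset (Fin 2)) := by
  constructor
  · rintro ⟨hne, h0, h1⟩
    rw [List.countP_eq_zero] at h1
    have hall : ∀ A ∈ L, A = ({0} : Finset (Fin 2)) := by
      intro A hA
      apply fin2_eq_single (hne A hA)
      intro j hj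
      fin_cases j
      · rfl
      · exact absurd hj (by simpa using h1 A hA)
    have hlen : L.length = m := by
      rw [← h0]
      symm
      rw [List.countP_eq_length]
      intro A hA
      simp [hall A hA]
    rw [← hlen]
    exact List.eq_replicate_of_mem hall
  · rintro rfl
    refine ⟨fun A hA => ?_, ?_, ?_⟩
    · rw [List.eq_of_mem_replicate hA]; simp
    · rw [List.countP_eq_length.2 (fun A hA => by rw [List.eq_of_mem_replicate hA]; simp)]
      simp
    · rw [List.countP_eq_zero]; intro A hA; rw [List.eq_of_mem_replicate hA]; simp

lemma dp_iff_0n (n : ℕ) (L : List (Finset (Fin 2))) :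
    DP 0 n L ↔ L = List.replicate n ({1} : Finset (Fin 2)) := by
  constructor
  · rintro ⟨hne, h0, h1⟩
    rw [List.countP_eq_zero] at h0
    have hall : ∀ A ∈ L, A = ({1} : Finset (Fin 2)) := by
      intro A hA
      apply fin2_eq_single (hne A hA)
      intro j hj
      fin_cases j
      · exact absurd (by simpa using hj) (by simpa using h0 A hA)
      · rfl
    have hlen : L.length = n := by
      rw [← h1]
      symm
      rw [List.countP_eq_length]
      intro A hA
      simp [hall A hA]
    rw [← hlen]
    exact List.eq_replicate_of_mem hall
  · rintro rfl
    refine ⟨fun A hA => ?_, ?_, ?_⟩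
    · rw [List.eq_of_mem_replicate hA]; simp
    · rw [List.countP_eq_zero]; intro A hA; rw [List.eq_of_mem_replicate hA]; simp
    · rw [List.countP_eq_length.2 (fun A hA => by rw [List.eq_of_mem_replicate hA]; simp)]
      simp

lemma card_eq_one_of_iff {p : List (Finset (Fin 2)) → Prop} {c : List (Finset (Fin 2))}
    (h : ∀ L, p L ↔ L = c) : Nat.card {L // p L} = 1 := by
  rw [Nat.card_eq_one_iff_unique]
  constructor
  · constructor
    intro a b
    exact Subtype.ext (((h a.1).mp a.2).trans (((h b.1).mp b.2)).symm)
  · exact ⟨⟨c, (h c).mpr rfl⟩⟩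

lemma dp_card_m0 (m : ℕ) : Nat.card {L : List (Finset (Fin 2)) // DP m 0 L} = 1 :=
  card_eq_one_of_iff (dp_iff_m0 m)

lemma dp_card_0n (n : ℕ) : Nat.card {L : List (Finset (Fin 2)) // DP 0 n L} = 1 :=
  card_eq_one_of_iff (dp_iff_0n n)

lemma dp_cons {a b : ℕ} {T : List (Finset (Fin 2))} (h : DP a b T)
    (A : Finset (Fin 2)) (hA : A.Nonempty) :
    DP (a + (if (0 : Fin 2) ∈ A then 1 else 0)) (b + (if (1 : Fin 2) ∈ A then 1 else 0))
      (A :: T) := by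
  obtain ⟨hne, h0, h1⟩ := h
  refine ⟨?_, ?_, ?_⟩
  · intro B hB
    rcases List.mem_cons.mp hB with rfl | hB
    · exact hA
    · exact hne B hB
  · rw [List.countP_cons, h0]; simp
  · rw [List.countP_cons, h1]; simp

lemma dp_card_rec (m n : ℕ) :
    Nat.card {L : List (Finset (Fin 2)) // DP (m+1) (n+1) L} =
    Nat.card {L : List (Finset (Fin 2)) // DP (m+1) n L} +
    Nat.card {L : List (Finset (Fin 2)) // DP m (n+1) L} +
    Nat.card {L : List (Finset (Fin 2)) // DP m n L} := by
  have h01 : ((0 : Fin 2) ∈ ({0, 1} : Finset (Fin 2))) ∧ ((1 : Fin 2) ∈ ({0, 1} : Finset (Fin 2)))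
    := by decide
  set F : ({L : List (Finset (Fin 2)) // DP (m+1) n L} ⊕
      {L : List (Finset (Fin 2)) // DP m (n+1) L} ⊕
      {L : List (Finset (Fin 2)) // DP m n L}) →
      {L : List (Finset (Fin 2)) // DP (m+1) (n+1) L} :=
    fun x => match x with
    | Sum.inl ⟨T, hT⟩ => ⟨({1} : Finset (Fin 2)) :: T, by
        have := dp_cons hT {1} (by decide); simpa using this⟩
    | Sum.inr (Sum.inl ⟨T, hT⟩) => ⟨({0} : Finset (Fin 2)) :: T, by
        have := dp_cons hT {0} (by decide); simpa using this⟩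
    | Sum.inr (Sum.inr ⟨T, hT⟩) => ⟨({0, 1} : Finset (Fin 2)) :: T, by
        have := dp_cons hT {0, 1} (by decide); simpa using this⟩
    with hF
  have hbij : Function.Bijective F := by
    constructor
    · rintro (⟨a, ha⟩ | ⟨a, ha⟩ | ⟨a, ha⟩) (⟨b, hb⟩ | ⟨b, hb⟩ | ⟨b, hb⟩) h <;>
        simp only [hF, Subtype.mk.injEq, List.cons.injEq] at h <;>
        first
        | (exact absurd h.1 (by decide))
        | (simp only [Sum.inl.injEq, Sum.inr.injEq, Subtype.mk.injEq]; exact h.2)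
    · rintro ⟨L, hL⟩
      match L with
      | [] =>
        exact absurd hL.2.1 (by simp)
      | A :: T =>
        obtain ⟨hne, h0, h1⟩ := hL
        rw [List.countP_cons] at h0 h1
        have hAne : A.Nonempty := hne A List.mem_cons_self
        by_cases hA0 : (0 : Fin 2) ∈ A <;> by_cases hA1 : (1 : Fin 2) ∈ A
        · -- A = {0,1}
          have hAeq : A = ({0, 1} : Finset (Fin 2)) := by
            ext j; fin_cases j <;> simp [hA0, hA1]
          have hT : DP m n T := by
            refine ⟨fun B hB => hne B (List.mem_cons_of_mem A hB), ?_, ?_⟩ <;>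
              simp [hA0, hA1] at h0 h1 <;> omega
          exact ⟨Sum.inr (Sum.inr ⟨T, hT⟩), Subtype.ext (by simp [hF, hAeq])⟩
        · -- A = {0}
          have hAeq : A = ({0} : Finset (Fin 2)) := by
            apply fin2_eq_single hAne
            intro j hj; fin_cases j
            · rfl
            · exact absurd hj hA1
          have hT : DP m (n+1) T := by
            refine ⟨fun B hB => hne B (List.mem_cons_of_mem A hB), ?_, ?_⟩ <;>
              simp [hA0, hA1] at h0 h1 <;> omega
          exact ⟨Sum.inr (Sum.inl ⟨T, hT⟩), Subtype.ext (by simp [hF, hAeq])⟩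
        · -- A = {1}
          have hAeq : A = ({1} : Finset (Fin 2)) := by
            apply fin2_eq_single hAne
            intro j hj; fin_cases j
            · exact absurd hj hA0
            · rfl
          have hT : DP (m+1) n T := by
            refine ⟨fun B hB => hne B (List.mem_cons_of_mem A hB), ?_, ?_⟩ <;>
              simp [hA0, hA1] at h0 h1 <;> omega
          exact ⟨Sum.inl ⟨T, hT⟩, Subtype.ext (by simp [hF, hAeq])⟩
        · obtain ⟨x, hx⟩ := hAne
          fin_cases x
          · exact absurd hx hA0
          · exact absurd hx hA1
  rw [← Nat.card_eq_of_bijective F hbij, Nat.card_sum, Nat.card_sum]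
  ring

/-- `f(m,n)` counts the sequences `(W_1,…,W_t)` of nonempty subsets of
`{0,1}` in which `0` occurs exactly `m` times and `1` occurs exactly `n` times
(the top-dimensional simplices of `P(m,n)`). -/
theorem delannoy_counts_executions (f : ℕ → ℕ → ℕ)
    (hf0 : ∀ m, f m 0 = 1) (h0f : ∀ n, f 0 n = 1)
    (hrec : ∀ m n, f (m + 1) (n + 1) = f (m + 1) n + f m (n + 1) + f m n) :
    ∀ m n, f m n = Nat.card {L : List (Finset (Fin 2)) //
      (∀ A ∈ L, A.Nonempty) ∧
      L.countP (fun A => decide ((0 : Fin 2) ∈ A)) = m ∧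
      L.countP (fun A => decide ((1 : Fin 2) ∈ A)) = n} := by
  have key : ∀ m n, f m n = Nat.card {L : List (Finset (Fin 2)) // DP m n L} := by
    intro m
    induction m with
    | zero => intro n; rw [h0f, dp_card_0n]
    | succ m ih =>
      intro n
      induction n with
      | zero => rw [hf0, dp_card_m0]
      | succ n ihn =>
        rw [hrec, dp_card_rec, ihn, ih (n+1), ih n]
  exact key
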